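/- For a prime p ≥ 5 and 1 ≤ k ≤ (p−1)/2, one has ((1−p)/2)_k · ((1+p)/2)_k ≡ (1/2)_k² · (1 − p² Σ_{j=0}^{k−1} 1/(2j+1)²) (mod p³) in Z_p. -/

import Mathlib

open Finset

private lemma asc_eval_prod {R : Type*} [CommSemiring R] (k : ℕ) (x : R) :
    (ascPochhammer R k).eval x = ∏ j ∈ range k, (x + j) := by
  induction k with
  | zero => simp
  | succ n ih => rw [ascPochhammer_succ_eval, ih, prod_range_succ]

private lemma key_bound (p : ℕ) [Fact p.Prime] (x : ℕ → ℚ_[p]) (ε : ℝ)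
    (hε0 : 0 ≤ ε) (hε1 : ε ≤ 1) (k : ℕ) (h : ∀ j < k, ‖x j‖ ≤ ε) :
    ‖∏ j ∈ range k, (1 - x j) - (1 - ∑ j ∈ range k, x j)‖ ≤ ε ^ 2 ∧
      ‖∑ j ∈ range k, x j‖ ≤ ε := by
  induction k with
  | zero => simp [hε0, pow_nonneg hε0]
  | succ n ih =>
    obtain ⟨ih1, ih2⟩ := ih (fun j hj => h j (by omega))
    have hn := h n (by omega)
    constructor
    · have key : ∏ j ∈ range (n+1), (1 - x j) - (1 - ∑ j ∈ range (n+1), x j)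
          = (∏ j ∈ range n, (1 - x j) - (1 - ∑ j ∈ range n, x j)) * (1 - x n)
            + (∑ j ∈ range n, x j) * x n := by
        rw [prod_range_succ, sum_range_succ]; ring
      rw [key]
      refine le_trans (Padic.nonarchimedean _ _) (max_le ?_ ?_)
      · rw [norm_mul]
        calc ‖∏ j ∈ range n, (1 - x j) - (1 - ∑ j ∈ range n, x j)‖ * ‖1 - x n‖
            ≤ ε ^ 2 * 1 := by
              apply mul_le_mul ih1 ?_ (norm_nonneg _) (by positivity)
              have : (1 : ℚ_[p]) - x n = 1 + (- x n) := by ring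
              rw [this]
              refine le_trans (Padic.nonarchimedean _ _) (max_le (by simp) ?_)
              rw [norm_neg]; exact le_trans hn hε1
          _ = ε ^ 2 := by ring
      · rw [norm_mul, sq]
        exact mul_le_mul ih2 hn (norm_nonneg _) hε0
    · rw [sum_range_succ]
      exact le_trans (Padic.nonarchimedean _ _) (max_le ih2 hn)

/-- For `p ≥ 5` prime and `1 ≤ k ≤ (p-1)/2`,
`((1-p)/2)_k ((1+p)/2)_k ≡ (1/2)_k² (1 - p² ∑_{j<k} 1/(2j+1)²) (mod p³)`. -/
theorem pochhammer_half_product (p : ℕ) [Fact p.Prime] (hp : 5 ≤ p)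
    (k : ℕ) (hk1 : 1 ≤ k) (hk2 : k ≤ (p - 1) / 2) :
    ‖(ascPochhammer ℚ_[p] k).eval ((1 - (p : ℚ_[p])) / 2) *
        (ascPochhammer ℚ_[p] k).eval ((1 + (p : ℚ_[p])) / 2) -
        ((ascPochhammer ℚ_[p] k).eval (1 / 2)) ^ 2 *
          (1 - (p : ℚ_[p]) ^ 2 *
            (∑ j ∈ Finset.range k, ((2 * (j : ℚ_[p]) + 1) ^ 2)⁻¹))‖
      ≤ (p : ℝ) ^ (-3 : ℤ) := by
  have hpprime := (Fact.out : p.Prime)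
  have hp1 : (1 : ℝ) ≤ (p : ℝ) := by exact_mod_cast hpprime.one_lt.le
  -- basic facts about 2j+1 for j < k
  have hlt : ∀ j < k, 2 * j + 1 < p := by
    intro j hj
    have : j + 1 ≤ (p - 1) / 2 := le_trans hj hk2
    omega
  -- norm of nat m with 0 < m < p is 1
  have hnorm1 : ∀ m : ℕ, 0 < m → m < p → ‖(m : ℚ_[p])‖ = 1 := by
    intro m hm0 hmp
    have hle : ‖((m : ℤ) : ℚ_[p])‖ ≤ 1 := Padic.norm_int_le_one _
    have hnlt : ¬ ‖((m : ℤ) : ℚ_[p])‖ < 1 := by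
      rw [Padic.norm_intCast_lt_one_iff]
      intro hdvd
      have := Int.le_of_dvd (by exact_mod_cast hm0) hdvd
      omega
    have := le_antisymm hle (not_lt.mp hnlt)
    simpa using this
  have h2 : ‖(2 : ℚ_[p])‖ = 1 := by
    have := hnorm1 2 (by omega) (by omega)
    simpa using this
  set x : ℕ → ℚ_[p] := fun j => (p : ℚ_[p]) ^ 2 * ((2 * (j : ℚ_[p]) + 1) ^ 2)⁻¹ with hx
  have ht : ∀ j : ℕ, (2 * (j : ℚ_[p]) + 1) = ((2 * j + 1 : ℕ) : ℚ_[p]) := by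
    intro j; push_cast; ring
  have htnorm : ∀ j < k, ‖(2 * (j : ℚ_[p]) + 1)‖ = 1 := by
    intro j hj
    rw [ht j]
    exact hnorm1 _ (by omega) (hlt j hj)
  have htnz : ∀ j : ℕ, (2 * (j : ℚ_[p]) + 1) ≠ 0 := by
    intro j
    rw [ht j]
    exact Nat.cast_ne_zero.mpr (by omega)
  -- norm bound on x
  have hxnorm : ∀ j < k, ‖x j‖ ≤ (p : ℝ) ^ (-2 : ℤ) := by
    intro j hj
    rw [hx]
    simp only [norm_mul, norm_pow, norm_inv, Padic.norm_p, htnorm j hj]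
    rw [show ((p : ℝ)⁻¹) ^ 2 * ((1 : ℝ) ^ 2)⁻¹ = (p : ℝ) ^ (-2 : ℤ) by
      rw [zpow_neg, ← inv_pow]; norm_num]
  -- the exact algebraic identity
  have hprod : (ascPochhammer ℚ_[p] k).eval ((1 - (p : ℚ_[p])) / 2) *
        (ascPochhammer ℚ_[p] k).eval ((1 + (p : ℚ_[p])) / 2)
      = ((ascPochhammer ℚ_[p] k).eval (1 / 2)) ^ 2 * ∏ j ∈ range k, (1 - x j) := by
    rw [asc_eval_prod, asc_eval_prod, asc_eval_prod, ← prod_mul_distrib, ← prod_pow,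
      ← prod_mul_distrib]
    refine prod_congr rfl fun j _ => ?_
    have hc : (2 * (j : ℚ_[p]) + 1) ^ 2 * ((2 * (j : ℚ_[p]) + 1) ^ 2)⁻¹ = 1 :=
      mul_inv_cancel₀ (pow_ne_zero _ (htnz j))
    linear_combination ((p : ℚ_[p]) ^ 2 / 4) * hc
  have hsum : (p : ℚ_[p]) ^ 2 * (∑ j ∈ range k, ((2 * (j : ℚ_[p]) + 1) ^ 2)⁻¹)
      = ∑ j ∈ range k, x j := by
    rw [mul_sum]
  rw [hprod, hsum, ← mul_sub, norm_mul]
  -- norm of the pochhammer factor is ≤ 1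
  have hC : ‖((ascPochhammer ℚ_[p] k).eval (1 / 2 : ℚ_[p])) ^ 2‖ ≤ 1 := by
    rw [asc_eval_prod, norm_pow]
    apply pow_le_one₀ (norm_nonneg _)
    rw [norm_prod]
    apply Finset.prod_le_one (fun j _ => norm_nonneg _)
    intro j _
    have he : (1 : ℚ_[p]) / 2 + j = (2 * (j : ℚ_[p]) + 1) / 2 := by ring
    rw [he, ht j, norm_div, h2, div_one]
    have hle : ‖(((2 * j + 1 : ℕ) : ℤ) : ℚ_[p])‖ ≤ 1 := Padic.norm_int_le_one _
    simpa using hle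
  have hε0 : (0 : ℝ) ≤ (p : ℝ) ^ (-2 : ℤ) := by positivity
  have hε1 : (p : ℝ) ^ (-2 : ℤ) ≤ 1 := by
    calc (p : ℝ) ^ (-2 : ℤ) ≤ (p : ℝ) ^ (0 : ℤ) := zpow_le_zpow_right₀ hp1 (by omega)
      _ = 1 := zpow_zero _
  have hkb := (key_bound p x _ hε0 hε1 k hxnorm).1
  calc ‖((ascPochhammer ℚ_[p] k).eval (1/2 : ℚ_[p])) ^ 2‖ *
        ‖∏ j ∈ range k, (1 - x j) - (1 - ∑ j ∈ range k, x j)‖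
      ≤ 1 * ((p : ℝ) ^ (-2 : ℤ)) ^ 2 :=
        mul_le_mul hC hkb (norm_nonneg _) zero_le_one
    _ = (p : ℝ) ^ (-4 : ℤ) := by
        rw [one_mul, ← zpow_natCast (((p : ℝ) ^ (-2 : ℤ))) 2, ← zpow_mul]; norm_num
    _ ≤ (p : ℝ) ^ (-3 : ℤ) := zpow_le_zpow_right₀ hp1 (by omega)
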